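/- arXiv:2405.04999 — 4 statements merged into one kernel-verified Lean document; each statement's English description precedes it below -/
import Mathlib

section
/- For any n×n real matrix A with columns A_1,...,A_n, let H_1 be the linear span of columns A_2,...,A_n, let B be the (n-1)×(n-1) minor obtained by removing the first row and column of A, let X ∈ ℝ^{n-1} be the first column of A with its first entry removed, and let a_{11} be the (1,1) entry of A. If B is invertible and A is symmetric, then the distance from A_1 to H_1 equals |⟨B^{-1}X, X⟩ − a_{11}| / sqrt(1 + ‖B^{-1}X‖²). -/
open MeasureTheory

/-- Fact 2.4: For a symmetric `(n+1)×(n+1)` matrix `A`, with `B` the minor obtained by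
removing the first row and column (assumed invertible), `X` the first column with
first entry removed, the distance from the first column `A₁` to the span `H₁` of the
other columns equals `|⟨B⁻¹X, X⟩ − a₁₁| / √(1 + ‖B⁻¹X‖²)`. -/
theorem stmt0 (n : ℕ) (A : Matrix (Fin (n + 1)) (Fin (n + 1)) ℝ) (hA : A.IsSymm)
    (B : Matrix (Fin n) (Fin n) ℝ) (hB : B = fun i j => A i.succ j.succ)
    (hBinv : IsUnit B.det)
    (X : Fin n → ℝ) (hX : X = fun i => A i.succ 0)
    (A1 : EuclideanSpace ℝ (Fin (n + 1))) (hA1 : ∀ i, A1 i = A i 0)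
    (H1 : Submodule ℝ (EuclideanSpace ℝ (Fin (n + 1))))
    (hH1 : H1 = Submodule.span ℝ
      {w : EuclideanSpace ℝ (Fin (n + 1)) | ∃ j : Fin (n + 1), j ≠ 0 ∧ ∀ i, w i = A i j}) :
    Metric.infDist A1 (H1 : Set (EuclideanSpace ℝ (Fin (n + 1))))
      = |(∑ i, B⁻¹.mulVec X i * X i) - A 0 0| /
        Real.sqrt (1 + ∑ i, (B⁻¹.mulVec X i) ^ 2) := by
  have hAsymm : ∀ i j, A i j = A j i := fun i j => (Matrix.IsSymm.apply hA j i)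
  have hBsymm : B.IsSymm := by
    rw [Matrix.IsSymm]; ext i j; rw [hB]; exact hAsymm _ _
  have hBinvsymm : (B⁻¹).IsSymm := by
    rw [Matrix.IsSymm, Matrix.transpose_nonsing_inv, hBsymm.eq]
  set a := A 0 0 with ha
  set y : Fin n → ℝ := B⁻¹.mulVec X with hy
  set s := ∑ i, y i * X i with hs
  set q := ∑ i, y i ^ 2 with hq
  have hq0 : 0 ≤ q := Finset.sum_nonneg fun i _ => sq_nonneg _
  have hq1 : (0:ℝ) < 1 + q := by linarith
  set c := (a - s) / (1 + q) with hc
  set u : EuclideanSpace ℝ (Fin (n+1)) := WithLp.toLp 2 (fun i : Fin (n+1) => (Fin.cases 1 (fun j => -y j) i : ℝ)) with hu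
  have hu0 : u 0 = 1 := rfl
  have huS : ∀ j : Fin n, u j.succ = -y j := fun j => by simp [hu]
  have hBy : B.mulVec y = X := by
    rw [hy, Matrix.mulVec_mulVec, Matrix.mul_nonsing_inv B hBinv, Matrix.one_mulVec]
  -- norm of u
  have hnormu : ‖u‖ = Real.sqrt (1 + q) := by
    rw [EuclideanSpace.norm_eq]
    congr 1
    rw [Fin.sum_univ_succ]
    simp [hu0, huS, hq, sq_abs]
  -- inner A1 u
  have hinner : (inner ℝ A1 u : ℝ) = a - s := by
    rw [PiLp.inner_apply]
    simp only [RCLike.inner_apply, starRingEnd_apply, star_trivial]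
    rw [Fin.sum_univ_succ]
    simp only [hu0, huS, hA1, hX, hs, mul_neg, mul_one]
    have : ∑ x : Fin n, -(A x.succ 0 * y x) = -∑ x : Fin n, y x * A x.succ 0 := by
      rw [← Finset.sum_neg_distrib]; exact Finset.sum_congr rfl fun x _ => by ring
    rw [show ∑ x : Fin n, -y x * A x.succ 0 = ∑ x : Fin n, -(A x.succ 0 * y x) from Finset.sum_congr rfl fun x _ => by ring, this]; ring
  -- u is orthogonal to H1
  have horth : ∀ w ∈ H1, (inner ℝ w u : ℝ) = 0 := by
    intro w hw
    have hle : H1 ≤ (ℝ ∙ u)ᗮ := by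
      rw [hH1]
      apply Submodule.span_le.2
      rintro w ⟨j, hj, hwj⟩
      rw [SetLike.mem_coe, Submodule.mem_orthogonal_singleton_iff_inner_left]
      obtain ⟨k, rfl⟩ := Fin.eq_succ_of_ne_zero hj
      rw [PiLp.inner_apply]
      simp only [RCLike.inner_apply, starRingEnd_apply, star_trivial]
      rw [Fin.sum_univ_succ]
      simp only [hu0, huS, hwj, mul_neg, mul_one]
      have h1 : A 0 k.succ = X k := by rw [hX, hAsymm]
      have h2 : ∑ x : Fin n, -(A x.succ k.succ * y x) = -(B.mulVec y) k := by
        have h3 : (B.mulVec y) k = ∑ x, A x.succ k.succ * y x := by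
          rw [Matrix.mulVec, dotProduct]
          exact Finset.sum_congr rfl fun x _ => by
            rw [hB]; show A k.succ x.succ * y x = _; rw [hAsymm]
        rw [h3, ← Finset.sum_neg_distrib]
      rw [h1, show ∑ x : Fin n, -y x * A x.succ k.succ = ∑ x : Fin n, -(A x.succ k.succ * y x) from Finset.sum_congr rfl fun x _ => by ring, h2, hBy]; ring
    exact Submodule.mem_orthogonal_singleton_iff_inner_left.1 (hle hw)
  have hBi : ∀ i j, B⁻¹ i j = B⁻¹ j i := fun i j => Matrix.IsSymm.apply hBinvsymm j i
  set z : Fin n → ℝ := fun i => X i + c * y i with hz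
  set t : Fin n → ℝ := B⁻¹.mulVec z with ht
  have hBt : B.mulVec t = z := by
    rw [ht, Matrix.mulVec_mulVec, Matrix.mul_nonsing_inv B hBinv, Matrix.one_mulVec]
  have htX : ∑ j, t j * X j = s + c * q := by
    have step : ∑ j, t j * X j = ∑ k, z k * y k := by
      rw [ht]
      calc ∑ j, (B⁻¹.mulVec z) j * X j
          = ∑ j, ∑ k, B⁻¹ j k * z k * X j := by
            refine Finset.sum_congr rfl fun j _ => ?_
            rw [Matrix.mulVec, dotProduct, Finset.sum_mul]
        _ = ∑ k, ∑ j, B⁻¹ j k * z k * X j := Finset.sum_comm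
        _ = ∑ k, z k * y k := by
            refine Finset.sum_congr rfl fun k _ => ?_
            have hyk : y k = ∑ j, B⁻¹ j k * X j := by
              rw [hy, Matrix.mulVec, dotProduct]
              exact Finset.sum_congr rfl fun j _ => by rw [hBi]
            rw [hyk, Finset.mul_sum]
            exact Finset.sum_congr rfl fun j _ => by ring
    calc ∑ j, t j * X j = ∑ k, z k * y k := step
      _ = ∑ k, (y k * X k + c * y k ^ 2) := by
          refine Finset.sum_congr rfl fun k _ => ?_
          simp only [hz]; ring
      _ = s + c * q := by
          rw [Finset.sum_add_distrib, ← Finset.mul_sum, hs, hq]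
  have hcq : c * (1 + q) = a - s := by
    rw [hc, div_mul_cancel₀ _ (ne_of_gt hq1)]
  have hmem : A1 - c • u ∈ H1 := by
    have heq : A1 - c • u
        = ∑ j : Fin n, t j • (WithLp.toLp 2 (fun i => A i j.succ) : EuclideanSpace ℝ (Fin (n+1))) := by
      ext i0
      have hrhs : (∑ j : Fin n, t j • (WithLp.toLp 2 (fun i => A i j.succ) : EuclideanSpace ℝ (Fin (n+1)))) i0
          = ∑ j : Fin n, t j * A i0 j.succ := by
        rw [WithLp.ofLp_sum, Finset.sum_apply]
        exact Finset.sum_congr rfl fun j _ => rfl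
      show A1 i0 - (c • u) i0 = _
      rw [hrhs]
      induction i0 using Fin.cases with
      | zero =>
        have : ∀ j : Fin n, A 0 j.succ = X j := fun j => by rw [hX, hAsymm]
        simp only [this, htX, hA1, PiLp.smul_apply, hu0, smul_eq_mul, mul_one, ← ha]
        nlinarith [hcq]
      | succ i =>
        have hrow : ∑ j : Fin n, t j * A i.succ j.succ = (B.mulVec t) i := by
          rw [Matrix.mulVec, dotProduct]
          exact Finset.sum_congr rfl fun j _ => by rw [hB]; ring
        rw [hrow, hBt]
        have hXi : A i.succ 0 = X i := by rw [hX]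
        simp only [hA1, PiLp.smul_apply, huS, smul_eq_mul, hXi]
        show X i - c * (-(y i)) = z i
        simp only [hz]; ring
    rw [heq, hH1]
    exact Submodule.sum_smul_mem _ _ fun j _ =>
      Submodule.subset_span ⟨j.succ, Fin.succ_ne_zero j, fun i => rfl⟩
  have hsqrtpos : (0:ℝ) < Real.sqrt (1 + q) := Real.sqrt_pos.2 hq1
  have hss : Real.sqrt (1 + q) * Real.sqrt (1 + q) = 1 + q := Real.mul_self_sqrt hq1.le
  have hgoal : |s - a| = |a - s| := abs_sub_comm _ _
  have key : |c| * Real.sqrt (1 + q) = |a - s| / Real.sqrt (1 + q) := by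
    rw [hc, abs_div, abs_of_pos hq1, div_mul_eq_mul_div, div_eq_div_iff (ne_of_gt hq1)
      (ne_of_gt hsqrtpos), mul_assoc, hss]
  refine le_antisymm ?_ ?_
  · have hle := Metric.infDist_le_dist_of_mem (x := A1) hmem
    have hdval : dist A1 (A1 - c • u) = |c| * Real.sqrt (1 + q) := by
      rw [dist_eq_norm, sub_sub_cancel, norm_smul, hnormu, Real.norm_eq_abs]
    rw [hgoal, ← key, ← hdval]
    exact hle
  · refine le_of_not_gt fun hlt => ?_
    obtain ⟨h, hh, hdist⟩ := (Metric.infDist_lt_iff ⟨0, H1.zero_mem⟩).1 hlt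
    have hCS : |a - s| ≤ dist A1 h * Real.sqrt (1 + q) := by
      have hle2 := abs_real_inner_le_norm (A1 - h) u
      rw [inner_sub_left, horth h hh, hinner, sub_zero, hnormu, ← dist_eq_norm] at hle2
      exact hle2
    rw [hgoal, lt_div_iff₀ hsqrtpos] at hdist
    linarith
end

section
/- Let M be an n×n real symmetric matrix with eigenvalue λ and corresponding eigenvector u (normalized so ‖u‖=1). Fix j ∈ [n], and let λ' be an eigenvalue of the principal minor M^{(j)} (M with the j-th row and column removed) with unit eigenvector v. Let X^{(j)} ∈ ℝ^{n-1} denote the j-th column of M with its j-th entry removed. Then |⟨v, X^{(j)}⟩| ≤ |λ − λ'| / |u_j|, provided u_j ≠ 0. -/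
open MeasureTheory

/-- Fact 7.3 (Tao–Vu): Let `M` be a real symmetric `(n+1)×(n+1)` matrix with eigenvalue
`lam` and unit eigenvector `u`, let `lam'` be an eigenvalue of the principal minor
`M⁽ʲ⁾` (the `j`-th row and column removed) with unit eigenvector `v`, and let `X⁽ʲ⁾`
be the `j`-th column of `M` with its `j`-th entry removed. If `u j ≠ 0` then
`|⟨v, X⁽ʲ⁾⟩| ≤ |lam − lam'| / |u j|`. -/
theorem stmt2 (n : ℕ) (M : Matrix (Fin (n + 1)) (Fin (n + 1)) ℝ) (hM : M.IsSymm)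
    (lam lam' : ℝ) (j : Fin (n + 1))
    (u : EuclideanSpace ℝ (Fin (n + 1))) (hu : ‖u‖ = 1)
    (hueig : ∀ i, (∑ k, M i k * u k) = lam * u i)
    (v : EuclideanSpace ℝ (Fin n)) (hv : ‖v‖ = 1)
    (hveig : ∀ i, (∑ k, M (j.succAbove i) (j.succAbove k) * v k) = lam' * v i)
    (huj : u j ≠ 0) :
    |∑ i, v i * M (j.succAbove i) j| ≤ |lam - lam'| / |u j| := by
  have hsym : ∀ a b, M a b = M b a := fun a b => (hM.apply a b).symm ▸ rfl
  set X := ∑ i, v i * M (j.succAbove i) j with hX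
  set T := ∑ i, v i * u (j.succAbove i) with hT
  have h1 : ∑ i, v i * (∑ k, M (j.succAbove i) (j.succAbove k) * u (j.succAbove k))
      = lam * T - u j * X := by
    have hrow : ∀ i : Fin n, ∑ k, M (j.succAbove i) (j.succAbove k) * u (j.succAbove k)
        = lam * u (j.succAbove i) - M (j.succAbove i) j * u j := by
      intro i
      have h := hueig (j.succAbove i)
      rw [Fin.sum_univ_succAbove (fun k => M (j.succAbove i) k * u k) j] at h
      simp only at h
      linarith
    rw [Finset.sum_congr rfl (fun i _ => by rw [hrow i])]
    rw [hT, hX, Finset.mul_sum, Finset.mul_sum, ← Finset.sum_sub_distrib]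
    exact Finset.sum_congr rfl (fun i _ => by ring)
  have h2 : ∑ i, v i * (∑ k, M (j.succAbove i) (j.succAbove k) * u (j.succAbove k))
      = lam' * T := by
    simp only [Finset.mul_sum]
    rw [Finset.sum_comm]
    have hcol : ∀ k : Fin n, ∑ i, v i * (M (j.succAbove i) (j.succAbove k) * u (j.succAbove k))
        = lam' * (v k * u (j.succAbove k)) := by
      intro k
      calc ∑ i, v i * (M (j.succAbove i) (j.succAbove k) * u (j.succAbove k))
          = (∑ i, M (j.succAbove k) (j.succAbove i) * v i) * u (j.succAbove k) := by
            rw [Finset.sum_mul]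
            exact Finset.sum_congr rfl (fun i _ => by
              rw [hsym (j.succAbove k) (j.succAbove i)]; ring)
        _ = lam' * (v k * u (j.succAbove k)) := by rw [hveig k]; ring
    rw [Finset.sum_congr rfl (fun k _ => hcol k), ← Finset.mul_sum, hT]
  have key : u j * X = (lam - lam') * T := by rw [sub_mul]; linarith
  have hv2 : ∑ i, v i ^ 2 = 1 := by
    have h : ‖v‖ ^ 2 = 1 := by rw [hv]; norm_num
    rw [EuclideanSpace.norm_eq,
      Real.sq_sqrt (Finset.sum_nonneg fun i _ => sq_nonneg _)] at h
    simpa [Real.norm_eq_abs, sq_abs] using h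
  have hu2 : ∑ k, u k ^ 2 = 1 := by
    have h : ‖u‖ ^ 2 = 1 := by rw [hu]; norm_num
    rw [EuclideanSpace.norm_eq,
      Real.sq_sqrt (Finset.sum_nonneg fun i _ => sq_nonneg _)] at h
    simpa [Real.norm_eq_abs, sq_abs] using h
  have hw2 : ∑ i, u (j.succAbove i) ^ 2 ≤ 1 := by
    rw [Fin.sum_univ_succAbove (fun k => u k ^ 2) j] at hu2
    nlinarith [sq_nonneg (u j)]
  have hTsq : T ^ 2 ≤ 1 := by
    have := Finset.sum_mul_sq_le_sq_mul_sq Finset.univ v (fun i => u (j.succAbove i))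
    rw [hv2, one_mul] at this
    exact le_trans (hT ▸ this) hw2
  have hT1 : |T| ≤ 1 := by nlinarith [abs_nonneg T, sq_abs T]
  have habs : |u j| * |X| ≤ |lam - lam'| := by
    have h := congrArg abs key
    rw [abs_mul, abs_mul] at h
    calc |u j| * |X| = |lam - lam'| * |T| := h
      _ ≤ |lam - lam'| * 1 := mul_le_mul_of_nonneg_left hT1 (abs_nonneg _)
      _ = |lam - lam'| := mul_one _
  rw [le_div_iff₀ (abs_pos.mpr huj), mul_comm]
  exact habs
end

section
/- Let X = X₁ + X₂ where X₁, X₂ ∈ ℝⁿ are independent random vectors, let X₂' be an independent copy of X₂, and let M be an n×n real symmetric matrix, θ ∈ ℝ, u ∈ ℝⁿ. Then |E exp(2πiθ⟨M(X₁+X₂), X₁+X₂⟩ + ⟨X₁+X₂, u⟩)|² ≤ E_{X₂,X₂'}[exp(⟨X₂+X₂', u⟩) · |E_{X₁} exp(4πiθ⟨M(X₂−X₂'), X₁⟩ + 2⟨X₁, u⟩)|]. -/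
open MeasureTheory ProbabilityTheory Real

namespace Stmt5Aux

variable {n : ℕ} (M : Matrix (Fin n) (Fin n) ℝ) (u : Fin n → ℝ)

/-- linear form -/
noncomputable def L (x : Fin n → ℝ) : ℝ := ∑ i, x i * u i

/-- bilinear form -/
noncomputable def B (x y : Fin n → ℝ) : ℝ := ∑ i, M.mulVec x i * y i

/-- quadratic form -/
noncomputable def Q (x : Fin n → ℝ) : ℝ := ∑ i, M.mulVec x i * x i

noncomputable def eF (x y : Fin n → ℝ) : ℂ :=
  Complex.exp (2 * (π : ℂ) * Complex.I *
      ((∑ i, M.mulVec (x + y) i * (x + y) i : ℝ) : ℂ)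
    + ((∑ i, (x i + y i) * u i : ℝ) : ℂ))

noncomputable def φF (d x : Fin n → ℝ) : ℂ :=
  Complex.exp (4 * (π : ℂ) * Complex.I *
      ((∑ i, M.mulVec d i * x i : ℝ) : ℂ)
    + ((2 * ∑ i, x i * u i : ℝ) : ℂ))

lemma L_add (x y : Fin n → ℝ) : (∑ i, (x i + y i) * u i) = L u x + L u y := by
  simp [L, add_mul, Finset.sum_add_distrib]

lemma eF_def' (x y : Fin n → ℝ) :
    eF M u x y = Complex.exp (2 * (π : ℂ) * Complex.I * ((Q M (x + y) : ℝ) : ℂ)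
      + ((L u x + L u y : ℝ) : ℂ)) := by
  unfold eF Q
  congr 2
  exact_mod_cast congrArg (fun t : ℝ => (t : ℂ)) (L_add u x y)

lemma φF_def' (d x : Fin n → ℝ) :
    φF M u d x = Complex.exp (4 * (π : ℂ) * Complex.I * ((B M d x : ℝ) : ℂ)
      + ((2 * L u x : ℝ) : ℂ)) := rfl

lemma B_symm (hM : M.IsSymm) (x y : Fin n → ℝ) : B M x y = B M y x := by
  unfold B
  simp only [Matrix.mulVec, dotProduct, Finset.sum_mul]
  rw [Finset.sum_comm]
  refine Finset.sum_congr rfl fun i _ => Finset.sum_congr rfl fun j _ => ?_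
  rw [hM.apply i j]
  ring

lemma B_sub_left (x y z : Fin n → ℝ) : B M (x - y) z = B M x z - B M y z := by
  unfold B
  simp [Matrix.mulVec_sub, sub_mul, Finset.sum_sub_distrib]

lemma Q_add (x y : Fin n → ℝ) :
    Q M (x + y) = Q M x + B M x y + B M y x + Q M y := by
  unfold Q B
  have h : ∀ i, M.mulVec (x + y) i * (x + y) i =
      M.mulVec x i * x i + M.mulVec x i * y i + M.mulVec y i * x i + M.mulVec y i * y i := by
    intro i
    simp only [Matrix.mulVec_add, Pi.add_apply]
    ring
  simp_rw [h, Finset.sum_add_distrib]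

lemma Q_identity (hM : M.IsSymm) (x₁ x₂ x₂' : Fin n → ℝ) :
    Q M (x₁ + x₂) = Q M (x₁ + x₂') + (Q M x₂ - Q M x₂') + 2 * B M (x₂ - x₂') x₁ := by
  have h1 := Q_add M x₁ x₂
  have h2 := Q_add M x₁ x₂'
  have h3 := B_symm M hM x₁ x₂
  have h4 := B_symm M hM x₁ x₂'
  have h5 := B_sub_left M x₂ x₂' x₁
  linarith

lemma key_identity (hM : M.IsSymm) (x₁ x₂ x₂' : Fin n → ℝ) :
    eF M u x₁ x₂ * (starRingEnd ℂ) (eF M u x₁ x₂') =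
      (Complex.exp (2 * (π : ℂ) * Complex.I * ((Q M x₂ - Q M x₂' : ℝ) : ℂ)) *
          ((rexp (L u x₂ + L u x₂') : ℝ) : ℂ)) * φF M u (x₂ - x₂') x₁ := by
  rw [eF_def', eF_def', φF_def', ← Complex.exp_conj, Complex.ofReal_exp,
    ← Complex.exp_add, ← Complex.exp_add, ← Complex.exp_add]
  congr 1
  have hc : (starRingEnd ℂ) (2 * (π : ℂ) * Complex.I * ((Q M (x₁ + x₂') : ℝ) : ℂ)
      + ((L u x₁ + L u x₂' : ℝ) : ℂ))
      = -(2 * (π : ℂ) * Complex.I * ((Q M (x₁ + x₂') : ℝ) : ℂ))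
        + ((L u x₁ + L u x₂' : ℝ) : ℂ) := by
    simp only [map_add, map_mul, Complex.conj_I, Complex.conj_ofReal, map_ofNat]
    ring
  rw [hc]
  have hQ : ((Q M (x₁ + x₂) : ℝ) : ℂ)
      = ((Q M (x₁ + x₂') + (Q M x₂ - Q M x₂') + 2 * B M (x₂ - x₂') x₁ : ℝ) : ℂ) :=
    congrArg (fun t : ℝ => (t : ℂ)) (Q_identity M hM x₁ x₂ x₂')
  push_cast at hQ ⊢
  linear_combination (2 * (π : ℂ) * Complex.I) * hQ

lemma measurable_mulVec (i : Fin n) : Measurable fun v : Fin n → ℝ => M.mulVec v i := by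
  simp only [Matrix.mulVec, dotProduct]
  exact Finset.measurable_sum _ fun j _ => (measurable_pi_apply j).const_mul _

lemma measurable_L : Measurable (L u) :=
  Finset.measurable_sum _ fun i _ => (measurable_pi_apply i).mul_const _

lemma measurable_eF :
    Measurable fun p : (Fin n → ℝ) × (Fin n → ℝ) => eF M u p.1 p.2 := by
  have hadd : Measurable fun p : (Fin n → ℝ) × (Fin n → ℝ) => p.1 + p.2 :=
    measurable_fst.add measurable_snd
  have hS : Measurable fun p : (Fin n → ℝ) × (Fin n → ℝ) =>
      ∑ i, M.mulVec (p.1 + p.2) i * (p.1 + p.2) i :=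
    Finset.measurable_sum _ fun i _ =>
      ((measurable_mulVec M i).comp hadd).mul ((measurable_pi_apply i).comp hadd)
  have hS2 : Measurable fun p : (Fin n → ℝ) × (Fin n → ℝ) =>
      ∑ i, (p.1 i + p.2 i) * u i :=
    Finset.measurable_sum _ fun i _ =>
      (((measurable_pi_apply i).comp measurable_fst).add
        ((measurable_pi_apply i).comp measurable_snd)).mul_const _
  exact Complex.measurable_exp.comp
    (((Complex.measurable_ofReal.comp hS).const_mul _).add
      (Complex.measurable_ofReal.comp hS2))

lemma measurable_φF (d : Fin n → ℝ) : Measurable fun x : Fin n → ℝ => φF M u d x := by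
  have hS : Measurable fun x : Fin n → ℝ => ∑ i, M.mulVec d i * x i :=
    Finset.measurable_sum _ fun i _ => (measurable_pi_apply i).const_mul _
  exact Complex.measurable_exp.comp
    (((Complex.measurable_ofReal.comp hS).const_mul _).add
      (Complex.measurable_ofReal.comp ((measurable_L u).const_mul 2)))

lemma measurable_φF2 :
    Measurable fun z : ((Fin n → ℝ) × (Fin n → ℝ)) × (Fin n → ℝ) =>
      φF M u (z.1.1 - z.1.2) z.2 := by
  have hsub : Measurable fun z : ((Fin n → ℝ) × (Fin n → ℝ)) × (Fin n → ℝ) =>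
      z.1.1 - z.1.2 :=
    (measurable_fst.comp measurable_fst).sub (measurable_snd.comp measurable_fst)
  have hS : Measurable fun z : ((Fin n → ℝ) × (Fin n → ℝ)) × (Fin n → ℝ) =>
      ∑ i, M.mulVec (z.1.1 - z.1.2) i * z.2 i :=
    Finset.measurable_sum _ fun i _ =>
      ((measurable_mulVec M i).comp hsub).mul ((measurable_pi_apply i).comp measurable_snd)
  exact Complex.measurable_exp.comp
    (((Complex.measurable_ofReal.comp hS).const_mul _).add
      (Complex.measurable_ofReal.comp
        (((measurable_L u).comp measurable_snd).const_mul 2)))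

lemma abs_eF (x y : Fin n → ℝ) : ‖eF M u x y‖ = rexp (L u x + L u y) := by
  rw [eF_def', Complex.norm_exp]
  congr 1
  simp [Complex.add_re, Complex.mul_re, Complex.I_re, Complex.I_im, Complex.ofReal_re,
    Complex.ofReal_im]

/-- Jensen / Cauchy–Schwarz: `(∫ g)² ≤ ∫ g²` on a probability space. -/
lemma sq_int {α : Type*} [MeasurableSpace α] {μ : Measure α} [IsProbabilityMeasure μ]
    {g : α → ℝ} (hg : Integrable g μ) (hg2 : Integrable (fun x => g x ^ 2) μ) :
    (∫ x, g x ∂μ) ^ 2 ≤ ∫ x, g x ^ 2 ∂μ := by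
  set c := ∫ x, g x ∂μ with hc
  have h0 : 0 ≤ ∫ x, (g x - c) ^ 2 ∂μ := integral_nonneg fun x => sq_nonneg _
  have hexp : ∫ x, (g x - c) ^ 2 ∂μ = (∫ x, g x ^ 2 ∂μ) - 2 * c * c + c ^ 2 := by
    have hfun : (fun x => (g x - c) ^ 2) = fun x => g x ^ 2 - 2 * c * g x + c ^ 2 :=
      funext fun x => by ring
    have hA : Integrable (fun x => g x ^ 2 - 2 * c * g x) μ := hg2.sub (hg.const_mul (2 * c))
    have hB : Integrable (fun x => 2 * c * g x) μ := hg.const_mul (2 * c)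
    rw [hfun, integral_add hA (integrable_const _), integral_sub hg2 hB,
      integral_const_mul, integral_const]
    simp [measure_univ, ← hc]
  nlinarith

set_option maxHeartbeats 2000000 in
/-- The core decoupling inequality, stated for the laws `ν₁`, `ν₂`. -/
lemma key (hM : M.IsSymm)
    (ν₁ ν₂ : Measure (Fin n → ℝ)) [IsProbabilityMeasure ν₁] [IsProbabilityMeasure ν₂]
    (h1 : Integrable (fun x => rexp (2 * L u x)) ν₁)
    (h2 : Integrable (fun x => rexp (L u x)) ν₂) :
    ‖∫ p : (Fin n → ℝ) × (Fin n → ℝ), eF M u p.1 p.2 ∂(ν₁.prod ν₂)‖ ^ 2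
      ≤ ∫ q : (Fin n → ℝ) × (Fin n → ℝ),
          rexp (L u q.1 + L u q.2) * ‖∫ x, φF M u (q.1 - q.2) x ∂ν₁‖
            ∂(ν₂.prod ν₂) := by
  have mE := measurable_eF M u
  -- rexp (L) is ν₁-integrable
  have hL1 : Integrable (fun x => rexp (L u x)) ν₁ := by
    refine ((integrable_const (1 : ℝ)).add h1).mono'
      ((Real.measurable_exp.comp (measurable_L u)).aestronglyMeasurable) ?_
    filter_upwards with x
    rw [Real.norm_eq_abs, abs_of_nonneg (exp_nonneg _)]
    rcases le_or_gt (L u x) 0 with h | h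
    · have h' : rexp (L u x) ≤ 1 := Real.exp_le_one_iff.mpr h
      have := Real.exp_nonneg (2 * L u x)
      simp only [Pi.add_apply]
      linarith
    · have h' : rexp (L u x) ≤ rexp (2 * L u x) := Real.exp_le_exp.mpr (by linarith)
      simp only [Pi.add_apply]
      linarith
  have hInt_e : Integrable (fun p : (Fin n → ℝ) × (Fin n → ℝ) => eF M u p.1 p.2)
      (ν₁.prod ν₂) := by
    refine (hL1.mul_prod h2).mono' mE.aestronglyMeasurable ?_
    filter_upwards with p
    rw [abs_eF, Real.exp_add]
  set h : (Fin n → ℝ) → ℂ := fun x₁ => ∫ y, eF M u x₁ y ∂ν₂ with hh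
  have hmh : AEStronglyMeasurable h ν₁ :=
    hInt_e.aestronglyMeasurable.integral_prod_right'
  set C := ∫ y, rexp (L u y) ∂ν₂ with hC
  have hhb : ∀ x₁, ‖h x₁‖ ≤ rexp (L u x₁) * C := by
    intro x₁
    calc ‖h x₁‖ ≤ ∫ y, ‖eF M u x₁ y‖ ∂ν₂ := by
          simpa using
            norm_integral_le_integral_norm (fun y => eF M u x₁ y) (μ := ν₂)
      _ = ∫ y, rexp (L u x₁) * rexp (L u y) ∂ν₂ := by
          simp only [abs_eF, Real.exp_add]
      _ = rexp (L u x₁) * C := by rw [integral_const_mul]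
  have hmg : AEStronglyMeasurable (fun x => ‖h x‖) ν₁ := by
    simpa using hmh.norm
  have hg : Integrable (fun x => ‖h x‖) ν₁ := by
    refine (hL1.mul_const C).mono' hmg ?_
    filter_upwards with x
    rw [Real.norm_eq_abs, abs_of_nonneg (norm_nonneg _)]
    exact hhb x
  have hg2 : Integrable (fun x => ‖h x‖ ^ 2) ν₁ := by
    refine (h1.mul_const (C ^ 2)).mono'
      ((hmg.aemeasurable.pow_const 2).aestronglyMeasurable) ?_
    filter_upwards with x
    rw [Real.norm_eq_abs, abs_of_nonneg (pow_nonneg (norm_nonneg _) _)]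
    calc ‖h x‖ ^ 2 ≤ (rexp (L u x) * C) ^ 2 :=
          pow_le_pow_left₀ (norm_nonneg _) (hhb x) 2
      _ = rexp (2 * L u x) * C ^ 2 := by
          rw [mul_pow]
          congr 1
          rw [sq, ← Real.exp_add]
          ring_nf
  -- step 1+2
  have e2 : ‖∫ p : (Fin n → ℝ) × (Fin n → ℝ), eF M u p.1 p.2 ∂(ν₁.prod ν₂)‖ ^ 2
      ≤ ∫ x, ‖h x‖ ^ 2 ∂ν₁ := by
    rw [integral_prod _ hInt_e]
    have a1 : ‖∫ x₁, h x₁ ∂ν₁‖ ≤ ∫ x, ‖h x‖ ∂ν₁ := by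
      simpa using norm_integral_le_integral_norm h (μ := ν₁)
    calc ‖∫ x₁, h x₁ ∂ν₁‖ ^ 2 ≤ (∫ x, ‖h x‖ ∂ν₁) ^ 2 :=
          pow_le_pow_left₀ (norm_nonneg _) a1 2
      _ ≤ _ := sq_int hg hg2
  -- the doubled function W
  set W : (Fin n → ℝ) × ((Fin n → ℝ) × (Fin n → ℝ)) → ℂ :=
    fun z => eF M u z.1 z.2.1 * (starRingEnd ℂ) (eF M u z.1 z.2.2) with hWdef
  have mW : Measurable W := by
    have g1 : Measurable fun z : (Fin n → ℝ) × ((Fin n → ℝ) × (Fin n → ℝ)) =>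
        (z.1, z.2.1) := measurable_fst.prodMk (measurable_fst.comp measurable_snd)
    have g2 : Measurable fun z : (Fin n → ℝ) × ((Fin n → ℝ) × (Fin n → ℝ)) =>
        (z.1, z.2.2) := measurable_fst.prodMk (measurable_snd.comp measurable_snd)
    have m1 := mE.comp g1
    have m2 := mE.comp g2
    have m2' : Measurable fun z : (Fin n → ℝ) × ((Fin n → ℝ) × (Fin n → ℝ)) =>
        (starRingEnd ℂ) (eF M u z.1 z.2.2) := continuous_star.measurable.comp m2
    exact m1.mul m2'
  have hIntW : Integrable W (ν₁.prod (ν₂.prod ν₂)) := by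
    refine (h1.mul_prod (h2.mul_prod h2)).mono' mW.aestronglyMeasurable ?_
    filter_upwards with z
    have : ‖W z‖ = rexp (L u z.1 + L u z.2.1) * rexp (L u z.1 + L u z.2.2) := by
      rw [hWdef]
      simp [norm_mul, Complex.norm_conj, abs_eF]
    rw [this, ← Real.exp_add, ← Real.exp_add, ← Real.exp_add]
    apply le_of_eq
    congr 1
    ring
  -- step 3 : ∫ |h|² = re (∫ W)
  have e3 : ∫ x, ‖h x‖ ^ 2 ∂ν₁ = (∫ z, W z ∂(ν₁.prod (ν₂.prod ν₂))).re := by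
    rw [integral_prod _ hIntW]
    have inner : ∀ x₁, (∫ q : (Fin n → ℝ) × (Fin n → ℝ), W (x₁, q) ∂(ν₂.prod ν₂))
        = ((‖h x₁‖ ^ 2 : ℝ) : ℂ) := by
      intro x₁
      have hmul := integral_prod_mul (μ := ν₂) (ν := ν₂)
        (fun y => eF M u x₁ y) (fun y => (starRingEnd ℂ) (eF M u x₁ y))
      calc (∫ q : (Fin n → ℝ) × (Fin n → ℝ), W (x₁, q) ∂(ν₂.prod ν₂))
          = (∫ y, eF M u x₁ y ∂ν₂) * ∫ y, (starRingEnd ℂ) (eF M u x₁ y) ∂ν₂ := hmul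
        _ = h x₁ * (starRingEnd ℂ) (h x₁) := by rw [integral_conj]
        _ = ((‖h x₁‖ ^ 2 : ℝ) : ℂ) := by
            rw [Complex.mul_conj, ← Complex.sq_norm]
    simp_rw [inner]
    have hcast : (∫ x, ((‖h x‖ ^ 2 : ℝ) : ℂ) ∂ν₁)
        = ((∫ x, ‖h x‖ ^ 2 ∂ν₁ : ℝ) : ℂ) := integral_ofReal
    rw [hcast, Complex.ofReal_re]
  -- step 4 : re (∫ W) ≤ ∫ |∫ W dν₁|
  have e4 : (∫ z, W z ∂(ν₁.prod (ν₂.prod ν₂))).re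
      ≤ ∫ q : (Fin n → ℝ) × (Fin n → ℝ), ‖∫ x₁, W (x₁, q) ∂ν₁‖ ∂(ν₂.prod ν₂) := by
    rw [integral_prod_symm _ hIntW]
    calc (∫ q : (Fin n → ℝ) × (Fin n → ℝ), ∫ x₁, W (x₁, q) ∂ν₁ ∂(ν₂.prod ν₂)).re
        ≤ ‖∫ q : (Fin n → ℝ) × (Fin n → ℝ), ∫ x₁, W (x₁, q) ∂ν₁ ∂(ν₂.prod ν₂)‖ :=
          Complex.re_le_norm _
      _ ≤ ∫ q : (Fin n → ℝ) × (Fin n → ℝ), ‖∫ x₁, W (x₁, q) ∂ν₁‖ ∂(ν₂.prod ν₂) := by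
          simpa using
            norm_integral_le_integral_norm
              (fun q : (Fin n → ℝ) × (Fin n → ℝ) => ∫ x₁, W (x₁, q) ∂ν₁) (μ := ν₂.prod ν₂)
  -- step 5 : pointwise identity
  have e5 : ∀ q : (Fin n → ℝ) × (Fin n → ℝ),
      ‖∫ x₁, W (x₁, q) ∂ν₁‖
        = rexp (L u q.1 + L u q.2) * ‖∫ x, φF M u (q.1 - q.2) x ∂ν₁‖ := by
    intro q
    have hWq : ∀ x₁, W (x₁, q) =
        (Complex.exp (2 * (π : ℂ) * Complex.I * ((Q M q.1 - Q M q.2 : ℝ) : ℂ)) *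
          ((rexp (L u q.1 + L u q.2) : ℝ) : ℂ)) * φF M u (q.1 - q.2) x₁ :=
      fun x₁ => key_identity M u hM x₁ q.1 q.2
    simp_rw [hWq]
    rw [integral_const_mul, norm_mul, norm_mul, Complex.norm_exp,
      Complex.norm_real, Real.norm_eq_abs, abs_of_nonneg (Real.exp_nonneg _)]
    have hre : (2 * (π : ℂ) * Complex.I * ((Q M q.1 - Q M q.2 : ℝ) : ℂ)).re = 0 := by
      simp [Complex.mul_re, Complex.I_re, Complex.I_im]
    rw [hre, Real.exp_zero, one_mul]
  calc ‖∫ p : (Fin n → ℝ) × (Fin n → ℝ), eF M u p.1 p.2 ∂(ν₁.prod ν₂)‖ ^ 2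
      ≤ ∫ x, ‖h x‖ ^ 2 ∂ν₁ := e2
    _ = (∫ z, W z ∂(ν₁.prod (ν₂.prod ν₂))).re := e3
    _ ≤ ∫ q : (Fin n → ℝ) × (Fin n → ℝ), ‖∫ x₁, W (x₁, q) ∂ν₁‖ ∂(ν₂.prod ν₂) := e4
    _ = _ := integral_congr_ae (Filter.Eventually.of_forall e5)

end Stmt5Aux

open Stmt5Aux

set_option maxHeartbeats 2000000 in
/-- Decoupling (Lemma 2.2): for `X = X₁ + X₂` with `X₁, X₂, X₂'` independent and `X₂'`
a copy of `X₂`, a symmetric matrix `M`, `θ ∈ ℝ` and `u ∈ ℝⁿ`,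
`|E e^{2πiθ⟨M X, X⟩ + ⟨X,u⟩}|² ≤ E_{X₂,X₂'}[e^{⟨X₂+X₂',u⟩} |E_{X₁} e^{4πiθ⟨M(X₂−X₂'),X₁⟩ + 2⟨X₁,u⟩}|]`.
The inner expectation over `X₁` is realized as an integral over an independent copy. -/
theorem stmt5 (n : ℕ) (Ω : Type*) [MeasurableSpace Ω] (μ : Measure Ω)
    [IsProbabilityMeasure μ]
    (X₁ X₂ X₂' : Ω → Fin n → ℝ)
    (hmeas : Measurable X₁ ∧ Measurable X₂ ∧ Measurable X₂')
    (hindep : iIndepFun ![X₁, X₂, X₂'] μ)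
    (hcopy : Measure.map X₂' μ = Measure.map X₂ μ)
    (M : Matrix (Fin n) (Fin n) ℝ) (hM : M.IsSymm) (θ : ℝ) (u : Fin n → ℝ)
    (hint1 : Integrable (fun ω => Real.exp (∑ i, (X₁ ω i + X₂ ω i) * u i)) μ)
    (hint2 : Integrable (fun ω => Real.exp (∑ i, (X₂ ω i + X₂' ω i) * u i)) μ)
    (hint3 : Integrable (fun ω => Real.exp (2 * ∑ i, X₁ ω i * u i)) μ) :
    ‖(∫ ω, Complex.exp
        (2 * (π : ℂ) * Complex.I *
            ((∑ i, M.mulVec (X₁ ω + X₂ ω) i * (X₁ ω + X₂ ω) i : ℝ) : ℂ)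
          + ((∑ i, (X₁ ω i + X₂ ω i) * u i : ℝ) : ℂ)) ∂μ)‖ ^ 2
      ≤ ∫ ω, Real.exp (∑ i, (X₂ ω i + X₂' ω i) * u i) *
          ‖(∫ ω', Complex.exp
            (4 * (π : ℂ) * Complex.I *
                ((∑ i, M.mulVec (X₂ ω - X₂' ω) i * X₁ ω' i : ℝ) : ℂ)
              + ((2 * ∑ i, X₁ ω' i * u i : ℝ) : ℂ)) ∂μ)‖ ∂μ := by
  obtain ⟨hm1, hm2, hm2'⟩ := hmeas
  set ν₁ := μ.map X₁ with hν₁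
  set ν₂ := μ.map X₂ with hν₂
  haveI : IsProbabilityMeasure ν₁ := Measure.isProbabilityMeasure_map hm1.aemeasurable
  haveI : IsProbabilityMeasure ν₂ := Measure.isProbabilityMeasure_map hm2.aemeasurable
  -- independence facts
  have hI12 : IndepFun X₁ X₂ μ := hindep.indepFun (show (0 : Fin 3) ≠ 1 by decide)
  have hI22 : IndepFun X₂ X₂' μ := hindep.indepFun (show (1 : Fin 3) ≠ 2 by decide)
  have hmap12 : μ.map (fun ω => (X₁ ω, X₂ ω)) = ν₁.prod ν₂ :=
    (indepFun_iff_map_prod_eq_prod_map_map hm1.aemeasurable hm2.aemeasurable).mp hI12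
  have hpair : μ.map (fun ω => (X₂ ω, X₂' ω)) = ν₂.prod ν₂ := by
    rw [(indepFun_iff_map_prod_eq_prod_map_map hm2.aemeasurable hm2'.aemeasurable).mp hI22,
      hcopy]
  -- integrability transfers
  have h1' : Integrable (fun x => rexp (2 * L u x)) ν₁ := by
    have hsm : AEStronglyMeasurable (fun x : Fin n → ℝ => rexp (2 * L u x)) (μ.map X₁) :=
      (Real.measurable_exp.comp ((measurable_L u).const_mul 2)).aestronglyMeasurable
    have hcomp : Integrable ((fun x : Fin n → ℝ => rexp (2 * L u x)) ∘ X₁) μ := hint3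
    exact (integrable_map_measure hsm hm1.aemeasurable).mpr hcomp
  have h22 : Integrable (fun q : (Fin n → ℝ) × (Fin n → ℝ) => rexp (L u q.1 + L u q.2))
      (ν₂.prod ν₂) := by
    have hsm : AEStronglyMeasurable
        (fun q : (Fin n → ℝ) × (Fin n → ℝ) => rexp (L u q.1 + L u q.2))
        (μ.map (fun ω => (X₂ ω, X₂' ω))) :=
      (Real.measurable_exp.comp
        (((measurable_L u).comp measurable_fst).add
          ((measurable_L u).comp measurable_snd))).aestronglyMeasurable
    have hcomp : Integrable ((fun q : (Fin n → ℝ) × (Fin n → ℝ) => rexp (L u q.1 + L u q.2))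
        ∘ (fun ω => (X₂ ω, X₂' ω))) μ := by
      refine hint2.congr (Filter.Eventually.of_forall fun ω => ?_)
      simp only [Function.comp_apply]
      rw [L_add]
    rw [← hpair]
    exact (integrable_map_measure hsm (hm2.prodMk hm2').aemeasurable).mpr hcomp
  have h2' : Integrable (fun x => rexp (L u x)) ν₂ := by
    haveI : (ae ν₂).NeBot := IsProbabilityMeasure.ae_neBot
    obtain ⟨x, hx⟩ := h22.prod_right_ae.exists
    have hx' := hx.const_mul (rexp (L u x))⁻¹
    refine hx'.congr (Filter.Eventually.of_forall fun y => ?_)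
    show (rexp (L u x))⁻¹ * rexp (L u x + L u y) = rexp (L u y)
    rw [Real.exp_add]
    field_simp
  -- rewrite LHS
  have hLHS : (∫ ω, Complex.exp
        (2 * (π : ℂ) * Complex.I *
            ((∑ i, M.mulVec (X₁ ω + X₂ ω) i * (X₁ ω + X₂ ω) i : ℝ) : ℂ)
          + ((∑ i, (X₁ ω i + X₂ ω i) * u i : ℝ) : ℂ)) ∂μ)
      = ∫ p : (Fin n → ℝ) × (Fin n → ℝ), eF M u p.1 p.2 ∂(ν₁.prod ν₂) := by
    rw [← hmap12, integral_map (hm1.prodMk hm2).aemeasurable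
      (measurable_eF M u).aestronglyMeasurable]
    rfl
  -- rewrite RHS
  have hinner : ∀ a b : Fin n → ℝ,
      (∫ ω', Complex.exp
            (4 * (π : ℂ) * Complex.I *
                ((∑ i, M.mulVec (a - b) i * X₁ ω' i : ℝ) : ℂ)
              + ((2 * ∑ i, X₁ ω' i * u i : ℝ) : ℂ)) ∂μ)
        = ∫ x, φF M u (a - b) x ∂ν₁ := by
    intro a b
    rw [hν₁, integral_map hm1.aemeasurable (measurable_φF M u (a - b)).aestronglyMeasurable]
    rfl
  have hGm : Measurable (fun q : (Fin n → ℝ) × (Fin n → ℝ) =>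
      rexp (L u q.1 + L u q.2) * ‖∫ x, φF M u (q.1 - q.2) x ∂ν₁‖) := by
    apply Measurable.mul
    · exact Real.measurable_exp.comp
        (((measurable_L u).comp measurable_fst).add ((measurable_L u).comp measurable_snd))
    · have hsm : StronglyMeasurable (fun q : (Fin n → ℝ) × (Fin n → ℝ) =>
          ∫ x, φF M u (q.1 - q.2) x ∂ν₁) :=
        (measurable_φF2 M u).stronglyMeasurable.integral_prod_right'
      exact continuous_norm.measurable.comp hsm.measurable
  have hRHS : (∫ ω, Real.exp (∑ i, (X₂ ω i + X₂' ω i) * u i) *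
          ‖(∫ ω', Complex.exp
            (4 * (π : ℂ) * Complex.I *
                ((∑ i, M.mulVec (X₂ ω - X₂' ω) i * X₁ ω' i : ℝ) : ℂ)
              + ((2 * ∑ i, X₁ ω' i * u i : ℝ) : ℂ)) ∂μ)‖ ∂μ)
      = ∫ q : (Fin n → ℝ) × (Fin n → ℝ),
          rexp (L u q.1 + L u q.2) * ‖∫ x, φF M u (q.1 - q.2) x ∂ν₁‖
            ∂(ν₂.prod ν₂) := by
    rw [← hpair, integral_map (hm2.prodMk hm2').aemeasurable hGm.aestronglyMeasurable]
    refine integral_congr_ae (Filter.Eventually.of_forall fun ω => ?_)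
    beta_reduce
    rw [hinner (X₂ ω) (X₂' ω), L_add]
  rw [hLHS, hRHS]
  exact key M u hM ν₁ ν₂ h1' h2'
end

section
/- For d ≥ 1 and s > 1, let A_d(s) denote the Lebesgue volume of the region {θ ∈ ℝ^d : ∏_{i=1}^d |θ_i| ≤ s^d and |θ_i| ≥ 1 for all i}. Then A_d is differentiable in s on (1,∞), its derivative is positive, and there exist a constant C_d and a polynomial p_d such that 0 < (d/ds) A_d(s) ≤ C_d s^{d−1} p_d(log s) for all s > 1. -/
open MeasureTheory Real

section Aux
open intervalIntegral

noncomputable def Hfun (k : ℕ) (L : ℝ) : ℝ := ∫ u in (0:ℝ)..L, Real.exp u * u ^ k / (k.factorial : ℝ)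

lemma Hcont_integrand (k : ℕ) : Continuous (fun u : ℝ => Real.exp u * u ^ k / (k.factorial : ℝ)) := by
  continuity

lemma Hderiv (k : ℕ) (L : ℝ) :
    HasDerivAt (Hfun k) (Real.exp L * L ^ k / (k.factorial : ℝ)) L := by
  exact intervalIntegral.integral_hasDerivAt_right
    ((Hcont_integrand k).intervalIntegrable _ _)
    ((Hcont_integrand k).stronglyMeasurableAtFilter _ _)
    (Hcont_integrand k).continuousAt

lemma Hcont (k : ℕ) : Continuous (Hfun k) := by
  have : Differentiable ℝ (Hfun k) := fun L => (Hderiv k L).differentiableAt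
  exact this.continuous

lemma Hnonneg (k : ℕ) {L : ℝ} (hL : 0 ≤ L) : 0 ≤ Hfun k L := by
  apply intervalIntegral.integral_nonneg hL
  intro u hu
  have h0 : 0 ≤ u := hu.1
  positivity

lemma Hzero (k : ℕ) : Hfun k 0 = 0 := by simp [Hfun]

lemma H0 (L : ℝ) : Hfun 0 L = Real.exp L - 1 := by
  simp [Hfun, integral_exp]

-- H (k+1) L + H k L = exp L * L^(k+1)/(k+1)!
lemma Hrec (k : ℕ) (L : ℝ) :
    Hfun (k+1) L + Hfun k L = Real.exp L * L ^ (k+1) / ((k+1).factorial : ℝ) := by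
  have hG : ∀ u : ℝ, HasDerivAt (fun u => Real.exp u * u ^ (k+1) / ((k+1).factorial : ℝ))
      (Real.exp u * u ^ (k+1) / ((k+1).factorial : ℝ) + Real.exp u * u ^ k / (k.factorial : ℝ)) u := by
    intro u
    have h1 : HasDerivAt (fun u : ℝ => Real.exp u * u ^ (k+1))
        (Real.exp u * u ^ (k+1) + Real.exp u * ((k+1) * u ^ k)) u := by
      exact ((Real.hasDerivAt_exp u).mul (hasDerivAt_pow (k+1) u)).congr_deriv (by simp)
    have := h1.div_const ((k+1).factorial : ℝ)
    refine this.congr_deriv ?_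
    have hfac : ((k+1).factorial : ℝ) = (k+1) * (k.factorial : ℝ) := by
      push_cast [Nat.factorial_succ]; ring
    rw [hfac]; field_simp
  have := intervalIntegral.integral_eq_sub_of_hasDerivAt (f := fun u => Real.exp u * u ^ (k+1) / ((k+1).factorial : ℝ))
    (fun u _ => hG u) (((Hcont_integrand (k+1)).add (Hcont_integrand k)).intervalIntegrable 0 L)
  rw [intervalIntegral.integral_add ((Hcont_integrand (k+1)).intervalIntegrable 0 L)
      ((Hcont_integrand k).intervalIntegrable 0 L)] at this
  simpa [Hfun] using this

-- convolution identity
lemma Hconv (k : ℕ) (L : ℝ) :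
    (∫ v in (0:ℝ)..L, Real.exp v * Hfun k (L - v)) = Hfun (k+1) L := by
  -- reflect
  have hrefl : (∫ v in (0:ℝ)..L, Real.exp v * Hfun k (L - v))
      = ∫ w in (0:ℝ)..L, Real.exp (L - w) * Hfun k w := by
    have := intervalIntegral.integral_comp_sub_left (a := (0:ℝ)) (b := L)
      (fun w => Real.exp (L - w) * Hfun k w) L
    simp only [sub_sub_cancel, sub_zero, sub_self] at this
    rw [← this]
  rw [hrefl]
  have pull : (∫ w in (0:ℝ)..L, Real.exp (L - w) * Hfun k w)
      = Real.exp L * ∫ w in (0:ℝ)..L, Real.exp (-w) * Hfun k w := by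
    rw [← intervalIntegral.integral_const_mul]
    congr 1; ext w; rw [Real.exp_sub]; rw [Real.exp_neg]; ring
  rw [pull]
  -- FTC for Φ
  have hF : ∀ w : ℝ, HasDerivAt (fun w => -Real.exp (-w) * Hfun k w)
      (Real.exp (-w) * Hfun k w - w ^ k / (k.factorial : ℝ)) w := by
    intro w
    have h1 : HasDerivAt (fun w : ℝ => -Real.exp (-w)) (Real.exp (-w)) w := by
      have := ((Real.hasDerivAt_exp (-w)).comp w (hasDerivAt_neg w)).neg
      exact this.congr_deriv (by simp)
    have := h1.mul (Hderiv k w)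
    refine this.congr_deriv ?_
    rw [Real.exp_neg]
    have : Real.exp w ≠ 0 := Real.exp_ne_zero w
    field_simp
    ring
  have key := intervalIntegral.integral_eq_sub_of_hasDerivAt (f := fun w => -Real.exp (-w) * Hfun k w)
    (fun w _ => hF w)
    ((((continuous_neg.rexp).mul (Hcont k)).sub
      ((continuous_pow k).div_const _)).intervalIntegrable 0 L)
  rw [intervalIntegral.integral_sub (f := fun w => Real.exp (-w) * Hfun k w)
      (((continuous_neg.rexp).mul (Hcont k)).intervalIntegrable 0 L)
      (((continuous_pow k).div_const _).intervalIntegrable 0 L)] at key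
  have hpow : (∫ w in (0:ℝ)..L, w ^ k / (k.factorial : ℝ)) = L ^ (k+1) / ((k+1).factorial : ℝ) := by
    rw [intervalIntegral.integral_div, integral_pow]
    have hfac : ((k+1).factorial : ℝ) = (k+1) * (k.factorial : ℝ) := by
      push_cast [Nat.factorial_succ]; ring
    rw [hfac]
    have h1 : ((k:ℝ)+1) ≠ 0 := by positivity
    have h2 : (k.factorial : ℝ) ≠ 0 := by positivity
    field_simp
    simp
  have hval : (∫ w in (0:ℝ)..L, Real.exp (-w) * Hfun k w)
      = -Real.exp (-L) * Hfun k L + L ^ (k+1) / ((k+1).factorial : ℝ) := by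
    have k2 := key
    simp only [Hzero, mul_zero, sub_zero] at k2
    rw [hpow] at k2
    linarith
  rw [hval]
  have := Hrec k L
  rw [mul_add]
  rw [show Real.exp L * (-Real.exp (-L) * Hfun k L) = -Hfun k L by
    rw [Real.exp_neg]; field_simp]
  rw [show Real.exp L * (L ^ (k+1) / ((k+1).factorial : ℝ)) = Real.exp L * L ^ (k+1) / ((k+1).factorial : ℝ) by ring]
  linarith

lemma S_empty (d : ℕ) {T : ℝ} (hT : T < 1) :
    {θ : Fin d → ℝ | (∏ i, |θ i|) ≤ T ∧ ∀ i, 1 ≤ |θ i|} = ∅ := by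
  ext θ
  simp only [Set.mem_setOf_eq, Set.mem_empty_iff_false, iff_false, not_and]
  intro h1 h2
  have : (1:ℝ) ≤ ∏ i, |θ i| := by
    calc (1:ℝ) = ∏ _i : Fin d, (1:ℝ) := by simp
    _ ≤ ∏ i, |θ i| := Finset.prod_le_prod (fun i _ => zero_le_one) (fun i _ => h2 i)
  linarith

lemma S_meas (d : ℕ) (T : ℝ) :
    MeasurableSet {θ : Fin d → ℝ | (∏ i, |θ i|) ≤ T ∧ ∀ i, 1 ≤ |θ i|} := by
  have : {θ : Fin d → ℝ | (∏ i, |θ i|) ≤ T ∧ ∀ i, 1 ≤ |θ i|}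
      = {θ : Fin d → ℝ | (∏ i, |θ i|) ≤ T} ∩ ⋂ i, {θ : Fin d → ℝ | 1 ≤ |θ i|} := by
    ext θ; simp [Set.mem_iInter]
  rw [this]
  exact (measurableSet_le (Finset.measurable_prod _ fun i _ => (measurable_pi_apply i).abs)
      measurable_const).inter
    (MeasurableSet.iInter fun i => measurableSet_le measurable_const (measurable_pi_apply i).abs)

lemma absSet {T : ℝ} (hT : 1 ≤ T) :
    {x : ℝ | 1 ≤ |x| ∧ |x| ≤ T} = Set.Icc (-T) (-1) ∪ Set.Icc 1 T := by
  ext x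
  simp only [Set.mem_setOf_eq, Set.mem_union, Set.mem_Icc]
  rcases le_or_gt 0 x with h | h
  · rw [abs_of_nonneg h]
    constructor
    · rintro ⟨h1, h2⟩; right; exact ⟨h1, h2⟩
    · rintro (⟨h1, h2⟩ | ⟨h1, h2⟩) <;> constructor <;> linarith
  · rw [abs_of_neg h]
    constructor
    · rintro ⟨h1, h2⟩; left; constructor <;> linarith
    · rintro (⟨h1, h2⟩ | ⟨h1, h2⟩) <;> constructor <;> linarith

lemma abs_one_le_of_mem {T x : ℝ} (hx : x ∈ Set.Icc (-T) (-1) ∪ Set.Icc 1 T) :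
    1 ≤ |x| ∧ |x| ≤ T := by
  rcases hx with ⟨h1, h2⟩ | ⟨h1, h2⟩
  · rw [abs_of_neg (by linarith)]; constructor <;> linarith
  · rw [abs_of_nonneg (by linarith)]; exact ⟨h1, h2⟩

lemma vol_base {T : ℝ} (hT : 1 ≤ T) :
    volume {θ : Fin 1 → ℝ | (∏ i, |θ i|) ≤ T ∧ ∀ i, 1 ≤ |θ i|} = ENNReal.ofReal (2 * (T - 1)) := by
  have mp := (MeasureTheory.volume_preserving_funUnique (Fin 1) ℝ).symm
  have h1 := (mp.measure_preimage (S_meas 1 T).nullMeasurableSet).symm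
  refine h1.trans ?_
  have hpre : (MeasurableEquiv.funUnique (Fin 1) ℝ).symm ⁻¹'
      {θ : Fin 1 → ℝ | (∏ i, |θ i|) ≤ T ∧ ∀ i, 1 ≤ |θ i|} = {x : ℝ | 1 ≤ |x| ∧ |x| ≤ T} := by
    ext x
    simp [MeasurableEquiv.funUnique, and_comm]
  rw [hpre, absSet hT]
  have hdisj : Disjoint (Set.Icc (-T) (-1)) (Set.Icc (1:ℝ) T) := by
    apply Set.disjoint_left.mpr
    rintro x ⟨_, h2⟩ ⟨h3, _⟩
    linarith
  rw [measure_union hdisj measurableSet_Icc, Real.volume_Icc, Real.volume_Icc,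
    ← ENNReal.ofReal_add (by linarith) (by linarith)]
  congr 1
  ring

lemma gcont (n : ℕ) (T : ℝ) :
    ContinuousOn (fun x : ℝ => 2 ^ n * Hfun (n-1) (Real.log T - Real.log |x|)) {x : ℝ | x ≠ 0} := by
  apply ContinuousOn.mul continuousOn_const
  apply (Hcont (n-1)).comp_continuousOn
  apply ContinuousOn.sub continuousOn_const
  apply Real.continuousOn_log.comp continuous_abs.continuousOn
  intro x hx
  simp only [Set.mem_compl_iff, Set.mem_singleton_iff]
  simpa [abs_eq_zero] using hx

lemma vol_formula : ∀ d : ℕ, 1 ≤ d → ∀ T : ℝ, 1 ≤ T →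
    volume {θ : Fin d → ℝ | (∏ i, |θ i|) ≤ T ∧ ∀ i, 1 ≤ |θ i|}
      = ENNReal.ofReal (2 ^ d * Hfun (d - 1) (Real.log T)) := by
  intro d hd
  induction d, hd using Nat.le_induction with
  | base =>
    intro T hT
    rw [vol_base hT]
    congr 1
    rw [show (1:ℕ) - 1 = 0 from rfl, H0, Real.exp_log (by linarith)]
    ring
  | succ n hn IH =>
    intro T hT
    have hTpos : (0:ℝ) < T := by linarith
    set e := MeasurableEquiv.piFinSuccAbove (fun _ : Fin (n+1) => ℝ) 0 with he
    have mp := (MeasureTheory.volume_preserving_piFinSuccAbove (fun _ : Fin (n+1) => ℝ) 0).symm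
    have h1 := (mp.measure_preimage (S_meas (n+1) T).nullMeasurableSet).symm
    rw [h1]
    have hpre : e.symm ⁻¹' {θ : Fin (n+1) → ℝ | (∏ i, |θ i|) ≤ T ∧ ∀ i, 1 ≤ |θ i|}
        = {q : ℝ × (Fin n → ℝ) | |q.1| * ∏ i, |q.2 i| ≤ T ∧ (1 ≤ |q.1| ∧ ∀ i, 1 ≤ |q.2 i|)} := by
      ext ⟨x, y⟩
      have hcons : e.symm (x, y) = Fin.cons x y := by
        simp [he, MeasurableEquiv.piFinSuccAbove, Fin.insertNthEquiv, Fin.insertNth_zero']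
      simp only [Set.mem_preimage, hcons, Set.mem_setOf_eq, Fin.prod_univ_succ, Fin.forall_fin_succ,
        Fin.cons_zero, Fin.cons_succ]
    rw [hpre]
    have hpm : MeasurableSet {q : ℝ × (Fin n → ℝ) | |q.1| * ∏ i, |q.2 i| ≤ T ∧ (1 ≤ |q.1| ∧ ∀ i, 1 ≤ |q.2 i|)} := by
      have h1m : Measurable fun q : ℝ × (Fin n → ℝ) => |q.1| * ∏ i, |q.2 i| :=
        measurable_fst.abs.mul (Finset.measurable_prod _ fun i _ => measurable_snd.eval.abs)
      have : {q : ℝ × (Fin n → ℝ) | |q.1| * ∏ i, |q.2 i| ≤ T ∧ (1 ≤ |q.1| ∧ ∀ i, 1 ≤ |q.2 i|)}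
          = {q : ℝ × (Fin n → ℝ) | |q.1| * ∏ i, |q.2 i| ≤ T} ∩ ({q | 1 ≤ |q.1|} ∩ ⋂ i, {q : ℝ × (Fin n → ℝ) | 1 ≤ |q.2 i|}) := by
        ext q; simp [Set.mem_iInter]
      rw [this]
      exact (measurableSet_le h1m measurable_const).inter
        ((measurableSet_le measurable_const measurable_fst.abs).inter
          (MeasurableSet.iInter fun i => measurableSet_le measurable_const measurable_snd.eval.abs))
    rw [show (volume : Measure (ℝ × (Fin n → ℝ))) = (volume : Measure ℝ).prod volume from rfl, Measure.prod_apply hpm]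
    have slice : ∀ x : ℝ,
        volume (Prod.mk x ⁻¹' {q : ℝ × (Fin n → ℝ) | |q.1| * ∏ i, |q.2 i| ≤ T ∧ (1 ≤ |q.1| ∧ ∀ i, 1 ≤ |q.2 i|)})
          = Set.indicator {x : ℝ | 1 ≤ |x| ∧ |x| ≤ T}
              (fun x => ENNReal.ofReal (2 ^ n * Hfun (n-1) (Real.log T - Real.log |x|))) x := by
      intro x
      by_cases h1x : 1 ≤ |x|
      · have hxpos : (0:ℝ) < |x| := lt_of_lt_of_le one_pos h1x
        have hset : Prod.mk x ⁻¹' {q : ℝ × (Fin n → ℝ) | |q.1| * ∏ i, |q.2 i| ≤ T ∧ (1 ≤ |q.1| ∧ ∀ i, 1 ≤ |q.2 i|)}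
            = {y : Fin n → ℝ | (∏ i, |y i|) ≤ T / |x| ∧ ∀ i, 1 ≤ |y i|} := by
          ext y
          simp only [Set.mem_preimage, Set.mem_setOf_eq]
          constructor
          · rintro ⟨a, _, c⟩; exact ⟨(le_div_iff₀' hxpos).mpr a, c⟩
          · rintro ⟨a, c⟩; exact ⟨(le_div_iff₀' hxpos).mp a, h1x, c⟩
        rw [hset]
        by_cases h2x : |x| ≤ T
        · have hT1 : 1 ≤ T / |x| := (one_le_div hxpos).mpr h2x
          rw [IH _ hT1, Real.log_div (by positivity) (ne_of_gt hxpos)]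
          rw [Set.indicator_of_mem (show x ∈ {x : ℝ | 1 ≤ |x| ∧ |x| ≤ T} from ⟨h1x, h2x⟩)]
        · have hlt : T / |x| < 1 := (div_lt_one hxpos).mpr (lt_of_not_ge h2x)
          rw [S_empty n hlt, measure_empty,
            Set.indicator_of_notMem (by simp only [Set.mem_setOf_eq, not_and]; intro; exact h2x)]
      · have hset : Prod.mk x ⁻¹' {q : ℝ × (Fin n → ℝ) | |q.1| * ∏ i, |q.2 i| ≤ T ∧ (1 ≤ |q.1| ∧ ∀ i, 1 ≤ |q.2 i|)} = ∅ := by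
          ext y
          simp only [Set.mem_preimage, Set.mem_setOf_eq, Set.mem_empty_iff_false, iff_false, not_and]
          intro _ h; exact absurd h h1x
        rw [hset, measure_empty,
          Set.indicator_of_notMem (by simp only [Set.mem_setOf_eq, not_and]; intro h; exact absurd h h1x)]
    rw [lintegral_congr slice]
    rw [absSet hT, lintegral_indicator (measurableSet_Icc.union measurableSet_Icc)]
    set A : Set ℝ := Set.Icc (-T) (-1) ∪ Set.Icc 1 T with hA
    set g : ℝ → ℝ := fun x => 2 ^ n * Hfun (n-1) (Real.log T - Real.log |x|) with hg
    have hAsub : A ⊆ {x : ℝ | x ≠ 0} := by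
      intro x hx
      have := (abs_one_le_of_mem hx).1
      simp only [Set.mem_setOf_eq]
      intro h; rw [h] at this; simp at this; linarith
    have hgc : ContinuousOn g A := (gcont n T).mono hAsub
    have hint : IntegrableOn g A := hgc.integrableOn_compact (isCompact_Icc.union isCompact_Icc)
    have hnn : 0 ≤ᵐ[volume.restrict A] g := by
      apply ae_restrict_of_forall_mem (measurableSet_Icc.union measurableSet_Icc)
      intro x hx
      obtain ⟨hx1, hx2⟩ := abs_one_le_of_mem hx
      have hlog : 0 ≤ Real.log T - Real.log |x| := by
        have := Real.log_le_log (by linarith) hx2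
        linarith
      have := Hnonneg (n-1) hlog
      positivity
    rw [← MeasureTheory.ofReal_integral_eq_lintegral_ofReal hint hnn]
    congr 1
    have hdisj : Disjoint (Set.Icc (-T) (-1)) (Set.Icc (1:ℝ) T) := by
      apply Set.disjoint_left.mpr
      rintro x ⟨_, h2⟩ ⟨h3, _⟩
      linarith
    rw [hA, MeasureTheory.setIntegral_union hdisj measurableSet_Icc
      (hint.mono_set Set.subset_union_left) (hint.mono_set Set.subset_union_right)]
    have e1 : ∫ x in Set.Icc (-T) (-1), g x = ∫ x in (-T)..(-1), g x := by
      rw [intervalIntegral.integral_of_le (by linarith), MeasureTheory.integral_Icc_eq_integral_Ioc]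
    have e2 : ∫ x in Set.Icc (1:ℝ) T, g x = ∫ x in (1:ℝ)..T, g x := by
      rw [intervalIntegral.integral_of_le (by linarith), MeasureTheory.integral_Icc_eq_integral_Ioc]
    have e3 : ∫ x in (-T)..(-1:ℝ), g x = ∫ x in (1:ℝ)..T, g x := by
      rw [← intervalIntegral.integral_comp_neg (a := 1) (b := T) g]
      apply intervalIntegral.integral_congr
      intro x _
      simp only [hg, abs_neg]
    have e4 : ∫ x in (1:ℝ)..T, g x
        = ∫ v in (0:ℝ)..(Real.log T), Real.exp v * (2 ^ n * Hfun (n-1) (Real.log T - v)) := by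
      have himg : Real.exp '' (Set.uIcc 0 (Real.log T)) ⊆ {x : ℝ | x ≠ 0} := by
        rintro y ⟨v, _, rfl⟩
        exact (Real.exp_pos v).ne'
      have subst := intervalIntegral.integral_comp_mul_deriv' (f := Real.exp) (f' := Real.exp)
        (g := g) (a := 0) (b := Real.log T)
        (fun x _ => Real.hasDerivAt_exp x) Real.continuous_exp.continuousOn
        ((gcont n T).mono himg)
      rw [Real.exp_zero, Real.exp_log hTpos] at subst
      rw [← subst]
      apply intervalIntegral.integral_congr
      intro v _
      simp only [Function.comp_apply, hg, abs_of_pos (Real.exp_pos v), Real.log_exp]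
      ring
    have e5 : ∫ v in (0:ℝ)..(Real.log T), Real.exp v * (2 ^ n * Hfun (n-1) (Real.log T - v))
        = 2 ^ n * Hfun n (Real.log T) := by
      have : (fun v => Real.exp v * (2 ^ n * Hfun (n-1) (Real.log T - v)))
          = fun v => (2:ℝ) ^ n * (Real.exp v * Hfun (n-1) (Real.log T - v)) := by
        ext v; ring
      rw [this, intervalIntegral.integral_const_mul, Hconv (n-1)]
      congr 2
      omega
    rw [e1, e2, e3, e4, e5]
    have : (n + 1) - 1 = n := by omega
    rw [this, pow_succ]
    ring

end Aux

/-- Lemma 8.2: let `A_d(s)` be the volume of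
`{θ ∈ ℝ^d : ∏ᵢ |θᵢ| ≤ s^d, |θᵢ| ≥ 1 ∀i}`. Then on `(1,∞)` the function `A_d` is
differentiable with positive derivative, and there are a constant `C_d` and a
polynomial `p_d` with `0 < A_d'(s) ≤ C_d s^{d−1} p_d(log s)` for all `s > 1`. -/
theorem stmt8 (d : ℕ) (hd : 1 ≤ d) :
    ∃ (C : ℝ) (p : Polynomial ℝ), ∀ s : ℝ, 1 < s →
      ∃ D : ℝ,
        HasDerivAt (fun t : ℝ =>
            (MeasureTheory.volume
              {θ : Fin d → ℝ | (∏ i, |θ i|) ≤ t ^ d ∧ ∀ i, 1 ≤ |θ i|}).toReal) D s ∧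
        0 < D ∧ D ≤ C * s ^ (d - 1) * p.eval (Real.log s) := by
  obtain ⟨k, rfl⟩ : ∃ k, d = k + 1 := ⟨d - 1, by omega⟩
  refine ⟨2 ^ (k+1) * (k+1 : ℝ) ^ (k+1) / (Nat.factorial k : ℝ), Polynomial.X ^ k, ?_⟩
  intro s hs
  have hs0 : (0:ℝ) < s := by linarith
  have hls : 0 < Real.log s := Real.log_pos hs
  have hdpos : (0:ℝ) < (k+1 : ℕ) := by positivity
  set D0 : ℝ := 2 ^ (k+1) *
    (Real.exp (((k+1 : ℕ):ℝ) * Real.log s) * (((k+1 : ℕ):ℝ) * Real.log s) ^ k / (Nat.factorial k : ℝ) *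
      (((k+1 : ℕ):ℝ) / s)) with hD0
  refine ⟨D0, ?_, ?_, ?_⟩
  · -- derivative
    have hlog : HasDerivAt (fun t : ℝ => ((k+1 : ℕ):ℝ) * Real.log t) (((k+1 : ℕ):ℝ) / s) s := by
      have := (Real.hasDerivAt_log (ne_of_gt hs0)).const_mul ((k+1 : ℕ):ℝ)
      simpa [div_eq_mul_inv, mul_comm] using this
    have hH := (Hderiv k (((k+1 : ℕ):ℝ) * Real.log s)).comp s hlog
    have hG : HasDerivAt (fun t : ℝ => 2 ^ (k+1) * Hfun k (((k+1 : ℕ):ℝ) * Real.log t)) D0 s := by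
      have := hH.const_mul ((2:ℝ) ^ (k+1))
      simpa [hD0, Function.comp, mul_assoc] using this
    apply hG.congr_of_eventuallyEq
    have hnhds : Set.Ioi (1:ℝ) ∈ nhds s := Ioi_mem_nhds hs
    filter_upwards [hnhds] with t ht
    have ht1 : (1:ℝ) < t := ht
    have h1t : (1:ℝ) ≤ t ^ (k+1) := one_le_pow₀ (by linarith)
    rw [vol_formula (k+1) (by omega) _ h1t]
    have hlogpow : Real.log (t ^ (k+1)) = ((k+1 : ℕ):ℝ) * Real.log t := by
      rw [Real.log_pow]
    rw [hlogpow]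
    have hnn : 0 ≤ 2 ^ (k+1) * Hfun ((k+1) - 1) (((k+1 : ℕ):ℝ) * Real.log t) := by
      have hlt : 0 ≤ ((k+1 : ℕ):ℝ) * Real.log t := by
        have : 0 ≤ Real.log t := Real.log_nonneg (le_of_lt ht1)
        positivity
      have := Hnonneg ((k+1)-1) hlt
      positivity
    rw [ENNReal.toReal_ofReal hnn]
    simp
  · -- positivity
    have h1 : 0 < (((k+1 : ℕ):ℝ) * Real.log s) := by positivity
    rw [hD0]
    positivity
  · -- bound
    apply le_of_eq
    rw [hD0, Real.exp_nat_mul, Real.exp_log hs0, mul_pow]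
    simp only [Polynomial.eval_pow, Polynomial.eval_X, Nat.add_sub_cancel]
    have hfac : (Nat.factorial k : ℝ) ≠ 0 := by positivity
    have hsne : s ≠ 0 := ne_of_gt hs0
    have hpow : s ^ (k+1) = s ^ k * s := pow_succ s k
    push_cast
    rw [hpow]
    field_simp
    ring
end
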